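/- Let p be an odd prime and k, t positive integers with t even. Consider the F_{p^k}-bilinear form B(x,y) = Tr_{F_{p^{4kt}}/F_{p^k}}(μ(x y^{p^{kt}} + y x^{p^{kt}})) on F_{p^{4kt}}, where μ ∈ F_{p^{2k}} is nonzero with μ^{p^k} = −μ. Then the radical W = {x ∈ F_{p^{4kt}} : B(x,y) = 0 for all y} equals {x ∈ F_{p^{4kt}} : x^{p^{2kt}} + x = 0}, and dim_{F_{p^k}} W = 2t. -/

import Mathlib

open Polynomial Finset

section Aux

variable {F : Type*} [Field F] [Fintype F] {p k t : ℕ}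

lemma aux_char (hp : p.Prime) (hk : 0 < k) (ht : 0 < t)
    (hF : Fintype.card F = p ^ (4 * k * t)) : CharP F p := by
  obtain ⟨r, hr⟩ := CharP.exists F
  obtain ⟨n, hrprime, hcard⟩ := @FiniteField.card F _ _ r hr
  have hdvd : r ∣ p ^ (4 * k * t) := by
    rw [← hF, hcard]
    exact dvd_pow_self r n.pos.ne'
  have : r = p := by
    have := hrprime.dvd_of_dvd_pow hdvd
    exact (Nat.prime_dvd_prime_iff_eq hrprime hp).mp this
  rwa [this] at hr

lemma aux_shift [CharP F p] (hp : Fact p.Prime) (hF : Fintype.card F = p ^ (4 * k * t))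
    (z : F) :
    ∑ i ∈ Finset.range (4 * t), (z ^ p ^ k) ^ p ^ (k * i)
      = ∑ i ∈ Finset.range (4 * t), z ^ p ^ (k * i) := by
  have hterm : ∀ i, (z ^ p ^ k) ^ p ^ (k * i) = z ^ p ^ (k * (i + 1)) := by
    intro i
    rw [← pow_mul, ← pow_add, Nat.mul_add_one, Nat.add_comm]
  simp_rw [hterm]
  have h1 : ∑ i ∈ Finset.range (4 * t + 1), z ^ p ^ (k * i)
      = ∑ i ∈ Finset.range (4 * t), z ^ p ^ (k * (i + 1)) + z ^ p ^ (k * 0) :=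
    Finset.sum_range_succ' _ _
  have h2 : ∑ i ∈ Finset.range (4 * t + 1), z ^ p ^ (k * i)
      = ∑ i ∈ Finset.range (4 * t), z ^ p ^ (k * i) + z ^ p ^ (k * (4 * t)) :=
    Finset.sum_range_succ _ _
  have h3 : z ^ p ^ (k * (4 * t)) = z := by
    have : k * (4 * t) = 4 * k * t := by ring
    rw [this, ← hF, FiniteField.pow_card]
  have h4 : z ^ p ^ (k * 0) = z := by simp
  rw [h3] at h2
  rw [h4] at h1
  exact add_right_cancel (h1.symm.trans h2)

lemma aux_shift_iter [CharP F p] (hp : Fact p.Prime) (hF : Fintype.card F = p ^ (4 * k * t))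
    (j : ℕ) (z : F) :
    ∑ i ∈ Finset.range (4 * t), (z ^ p ^ (k * j)) ^ p ^ (k * i)
      = ∑ i ∈ Finset.range (4 * t), z ^ p ^ (k * i) := by
  induction j with
  | zero => simp
  | succ j ih =>
      have : z ^ p ^ (k * (j + 1)) = (z ^ p ^ (k * j)) ^ p ^ k := by
        rw [← pow_mul, ← pow_add, Nat.mul_add_one]
      rw [this, aux_shift hp hF, ih]

lemma aux_nondeg [CharP F p] (hp : Fact p.Prime) (hk : 0 < k) (ht : 0 < t)
    (hF : Fintype.card F = p ^ (4 * k * t)) (c : F)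
    (h : ∀ y : F, ∑ i ∈ Finset.range (4 * t), (c * y) ^ p ^ (k * i) = 0) : c = 0 := by
  have hp1 : 1 < p := hp.out.one_lt
  set P : F[X] := ∑ i ∈ Finset.range (4 * t), C (c ^ p ^ (k * i)) * X ^ p ^ (k * i) with hP
  have heval : ∀ y : F, P.eval y = 0 := by
    intro y
    rw [hP]
    simp only [eval_finset_sum, eval_mul, eval_C, eval_pow, eval_X]
    simpa only [mul_pow] using h y
  have hdegle : P.natDegree ≤ p ^ (k * (4 * t - 1)) := by
    apply Polynomial.natDegree_sum_le_of_forall_le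
    intro i hi
    refine (Polynomial.natDegree_C_mul_le _ _).trans ?_
    rw [natDegree_X_pow]
    exact Nat.pow_le_pow_right hp.out.pos (Nat.mul_le_mul_left k
      (Nat.le_sub_one_of_lt (Finset.mem_range.mp hi)))
  have hdeglt : P.natDegree < Fintype.card F := by
    rw [hF]
    refine lt_of_le_of_lt hdegle (Nat.pow_lt_pow_right hp1 ?_)
    have h1 : 4 * t - 1 < 4 * t := Nat.sub_lt (by positivity) one_pos
    calc k * (4 * t - 1) < k * (4 * t) := (Nat.mul_lt_mul_left hk).mpr h1
      _ = 4 * k * t := by ring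
  have hP0 : P = 0 :=
    Polynomial.eq_zero_of_natDegree_lt_card_of_eval_eq_zero P Function.injective_id
      heval hdeglt
  have hcoeff : P.coeff (p ^ (k * (4 * t - 1))) = c ^ p ^ (k * (4 * t - 1)) := by
    rw [hP, Polynomial.finset_sum_coeff]
    have : ∀ i ∈ Finset.range (4 * t),
        (C (c ^ p ^ (k * i)) * X ^ p ^ (k * i)).coeff (p ^ (k * (4 * t - 1)))
          = if i = 4 * t - 1 then c ^ p ^ (k * (4 * t - 1)) else 0 := by
      intro i _
      rw [Polynomial.coeff_C_mul, Polynomial.coeff_X_pow]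
      by_cases hcase : i = 4 * t - 1
      · subst hcase; simp
      · have hne : p ^ (k * (4 * t - 1)) ≠ p ^ (k * i) := by
          intro heq
          exact hcase (Nat.eq_of_mul_eq_mul_left hk
            (Nat.pow_right_injective hp.out.two_le heq)).symm
        simp [hne, hcase]
    rw [Finset.sum_congr rfl this, Finset.sum_ite_eq' (Finset.range (4 * t)) (4 * t - 1)]
    have hmem : 4 * t - 1 ∈ Finset.range (4 * t) :=
      Finset.mem_range.mpr (Nat.sub_lt (by positivity) one_pos)
    simp [hmem]
  rw [hP0] at hcoeff
  simp only [Polynomial.coeff_zero] at hcoeff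
  exact pow_eq_zero_iff (pow_ne_zero _ hp.out.pos.ne') |>.mp hcoeff.symm

lemma aux_count [CharP F p] (hp : Fact p.Prime) (hk : 0 < k) (ht : 0 < t)
    (hF : Fintype.card F = p ^ (4 * k * t)) :
    Nat.card {x : F | x ^ p ^ (2 * k * t) + x = 0} = (p ^ k) ^ (2 * t) := by
  classical
  have hp1 : 1 < p := hp.out.one_lt
  set B : ℕ := p ^ (2 * k * t) with hB
  have hB1 : 1 < B := Nat.one_lt_pow (by positivity) hp1
  set L : F[X] := X ^ B + X with hL
  have hLdeg : L.natDegree = B := by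
    rw [hL]
    compute_degree!
    · rw [if_neg (by omega : ¬ 1 = B)]; norm_num
    · omega
  have hLne : L ≠ 0 := by
    intro h0
    have := hLdeg
    rw [h0, natDegree_zero] at this
    omega
  -- separable
  have hsep : L.Separable := by
    have hder : derivative L = 1 := by
      rw [hL]
      simp only [derivative_add, derivative_X_pow, derivative_X]
      have : (B : F) = 0 := by
        rw [hB]
        push_cast
        rw [CharP.cast_eq_zero F p]
        exact zero_pow (by positivity)
      rw [this]
      simp
    rw [Polynomial.Separable, hder]
    exact isCoprime_one_right
  -- L divides X^q - X
  have hq : Fintype.card F = B * B := by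
    rw [hF, hB, ← pow_add]
    ring_nf
  have hdvd : L ∣ (X ^ Fintype.card F - X : F[X]) := by
    have hpow : L ^ B = X ^ (B * B) + X ^ B := by
      rw [hL]
      have h2 := add_pow_char_pow (R := F[X]) (X ^ B) X p (2 * k * t)
      rw [← hB] at h2
      rw [h2, ← pow_mul]
    have : (X ^ Fintype.card F - X : F[X]) = L ^ B - L := by
      rw [hpow, hL, hq]
      ring
    rw [this]
    exact dvd_sub (dvd_pow_self L (by omega : B ≠ 0)) dvd_rfl
  -- X^q - X splits
  have hXq_splits : (X ^ Fintype.card F - X : F[X]).Splits := by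
    rw [Polynomial.splits_iff_card_roots, FiniteField.roots_X_pow_card_sub_X]
    have hdeg : (X ^ Fintype.card F - X : F[X]).natDegree = Fintype.card F := by
      have : 1 < Fintype.card F := Fintype.one_lt_card
      compute_degree!
      · rw [if_neg (by omega : ¬ 1 = Fintype.card F)]; norm_num
      · omega
    rw [hdeg]
    simp [Finset.card_univ]
  have hXq_ne : (X ^ Fintype.card F - X : F[X]) ≠ 0 := FiniteField.X_pow_card_sub_X_ne_zero F Fintype.one_lt_card
  have hsplits : L.Splits :=
    Polynomial.Splits.of_dvd hXq_splits hXq_ne hdvd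
  -- card of root set
  have hcard : Fintype.card (L.rootSet F) = B := by
    have := Polynomial.card_rootSet_eq_natDegree hsep
      (by rwa [Algebra.algebraMap_self, Polynomial.map_id] : (L.map (algebraMap F F)).Splits)
    rw [this, hLdeg]
  have hset : {x : F | x ^ p ^ (2 * k * t) + x = 0} = L.rootSet F := by
    ext x
    rw [Polynomial.mem_rootSet_of_ne hLne]
    simp [hL, hLne, hB, Set.mem_setOf_eq]
  rw [hset]
  rw [Nat.card_eq_fintype_card]
  rw [hcard, hB, ← pow_mul]
  ring_nf


lemma aux_mu {μ : F} (hμsub : μ ^ p ^ (2 * k) = μ) (m : ℕ) : μ ^ p ^ (2 * k * m) = μ := by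
  induction m with
  | zero => simp
  | succ m ih =>
      have : 2 * k * (m + 1) = 2 * k * m + 2 * k := by ring
      rw [this, pow_add, pow_mul, ih, hμsub]

end Aux

theorem stmt_18 (p k t : ℕ) (hp : p.Prime) (hodd : Odd p) (hk : 0 < k)
    (ht : 0 < t) (hteven : Even t)
    (F : Type*) [Field F] [Fintype F] (hF : Fintype.card F = p ^ (4 * k * t))
    (μ : F) (hμ0 : μ ≠ 0) (hμsub : μ ^ p ^ (2 * k) = μ) (hμ : μ ^ p ^ k = -μ) :
    {x : F | ∀ y : F,
        ∑ i ∈ Finset.range (4 * t),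
          (μ * (x * y ^ p ^ (k * t) + y * x ^ p ^ (k * t))) ^ p ^ (k * i) = 0} =
      {x : F | x ^ p ^ (2 * k * t) + x = 0} ∧
    Nat.card {x : F | ∀ y : F,
        ∑ i ∈ Finset.range (4 * t),
          (μ * (x * y ^ p ^ (k * t) + y * x ^ p ^ (k * t))) ^ p ^ (k * i) = 0} =
      (p ^ k) ^ (2 * t) := by
  haveI : Fact p.Prime := ⟨hp⟩
  haveI : CharP F p := aux_char hp hk ht hF
  obtain ⟨u, hu⟩ := hteven
  -- μ is fixed by p^(3kt)-th power
  have hmu3 : μ ^ p ^ (3 * k * t) = μ := by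
    have h3 : 3 * k * t = 2 * k * (3 * u) := by subst hu; ring
    rw [h3]
    exact aux_mu hμsub (3 * u)
  -- the key pointwise equivalence
  have key : ∀ x : F,
      (∀ y : F, ∑ i ∈ Finset.range (4 * t),
          (μ * (x * y ^ p ^ (k * t) + y * x ^ p ^ (k * t))) ^ p ^ (k * i) = 0)
        ↔ x ^ p ^ (2 * k * t) + x = 0 := by
    intro x
    set c : F := μ * x ^ p ^ (3 * k * t) + μ * x ^ p ^ (k * t) with hc
    have hsum : ∀ y : F,
        ∑ i ∈ Finset.range (4 * t),
            (μ * (x * y ^ p ^ (k * t) + y * x ^ p ^ (k * t))) ^ p ^ (k * i)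
          = ∑ i ∈ Finset.range (4 * t), (c * y) ^ p ^ (k * i) := by
      intro y
      have e1 : ∀ i : ℕ, (μ * (x * y ^ p ^ (k * t) + y * x ^ p ^ (k * t))) ^ p ^ (k * i)
          = (μ * x * y ^ p ^ (k * t)) ^ p ^ (k * i) + (μ * x ^ p ^ (k * t) * y) ^ p ^ (k * i) := by
        intro i
        rw [show μ * (x * y ^ p ^ (k * t) + y * x ^ p ^ (k * t))
            = μ * x * y ^ p ^ (k * t) + μ * x ^ p ^ (k * t) * y by ring]
        exact add_pow_char_pow _ _ p (k * i)
      have e2 : ∀ i : ℕ, (c * y) ^ p ^ (k * i)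
          = (μ * x ^ p ^ (3 * k * t) * y) ^ p ^ (k * i)
            + (μ * x ^ p ^ (k * t) * y) ^ p ^ (k * i) := by
        intro i
        rw [hc, show (μ * x ^ p ^ (3 * k * t) + μ * x ^ p ^ (k * t)) * y
            = μ * x ^ p ^ (3 * k * t) * y + μ * x ^ p ^ (k * t) * y by ring]
        exact add_pow_char_pow _ _ p (k * i)
      simp_rw [e1, e2, Finset.sum_add_distrib]
      congr 1
      -- shift the first summand by p^(3kt)
      have hshift := aux_shift_iter (p := p) (k := k) (t := t) ‹Fact p.Prime› hF (3 * t)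
        (μ * x * y ^ p ^ (k * t))
      have hz : (μ * x * y ^ p ^ (k * t)) ^ p ^ (k * (3 * t))
          = μ * x ^ p ^ (3 * k * t) * y := by
        rw [mul_pow, mul_pow, ← pow_mul, ← pow_add]
        have hky : k * t + k * (3 * t) = 4 * k * t := by ring
        rw [hky, ← hF, FiniteField.pow_card]
        have hkk : k * (3 * t) = 3 * k * t := by ring
        rw [hkk, hmu3]
      rw [← hshift, hz]
    constructor
    · intro h
      have hc0 : c = 0 := aux_nondeg ‹Fact p.Prime› hk ht hF c
        (fun y => by rw [← hsum y]; exact h y)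
      -- deduce x ^ p ^ (2kt) + x = 0
      have hfact : c = μ * (x ^ p ^ (2 * k * t) + x) ^ p ^ (k * t) := by
        rw [hc, add_pow_char_pow _ _ p (k * t), ← pow_mul, ← pow_add]
        have : 2 * k * t + k * t = 3 * k * t := by ring
        rw [this, mul_add]
      rw [hfact, mul_eq_zero] at hc0
      rcases hc0 with h1 | h2
      · exact absurd h1 hμ0
      · exact pow_eq_zero_iff (pow_ne_zero _ hp.pos.ne') |>.mp h2
    · intro h y
      rw [hsum y]
      have hc0 : c = 0 := by
        have hfact : c = μ * (x ^ p ^ (2 * k * t) + x) ^ p ^ (k * t) := by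
          rw [hc, add_pow_char_pow _ _ p (k * t), ← pow_mul, ← pow_add]
          have : 2 * k * t + k * t = 3 * k * t := by ring
          rw [this, mul_add]
        rw [hfact, h, zero_pow (pow_ne_zero _ hp.pos.ne'), mul_zero]
      simp [hc0, zero_pow (pow_ne_zero _ hp.pos.ne')]
  have hseteq : {x : F | ∀ y : F,
      ∑ i ∈ Finset.range (4 * t),
        (μ * (x * y ^ p ^ (k * t) + y * x ^ p ^ (k * t))) ^ p ^ (k * i) = 0}
      = {x : F | x ^ p ^ (2 * k * t) + x = 0} := by
    ext x
    exact key x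
  refine ⟨hseteq, ?_⟩
  rw [hseteq]
  exact aux_count ‹Fact p.Prime› hk ht hF
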